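/- Let G be a finite group, D a normal subgroup of G with trivial center, and N₁ a minimal normal subgroup of G contained in D with N₁ non-abelian simple. If G/(N₁·C_G(N₁)) is solvable and D has no non-trivial solvable quotient (D equals its solvable residual), then D = N₁ × C_D(N₁). -/

import Mathlib

/-- `N` is a minimal normal subgroup of `G`. -/
def IsMinimalNormal {G : Type*} [Group G] (N : Subgroup G) : Prop :=
  N.Normal ∧ N ≠ ⊥ ∧ ∀ M : Subgroup G, M.Normal → M ≤ N → M = ⊥ ∨ M = N

/-- The centralizer of a normal subgroup is normal. -/
instance centralizerNormal {G : Type*} [Group G] (N : Subgroup G) [hN : N.Normal] :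
    (Subgroup.centralizer (N : Set G)).Normal := by
  constructor
  intro c hc g
  rw [Subgroup.mem_centralizer_iff] at hc ⊢
  intro n hn
  have h1 : g⁻¹ * n * g ∈ N := by
    have := hN.conj_mem n hn g⁻¹; simpa using this
  have h2 := hc _ h1
  calc n * (g * c * g⁻¹) = g * ((g⁻¹ * n * g) * c) * g⁻¹ := by group
    _ = g * (c * (g⁻¹ * n * g)) * g⁻¹ := by rw [h2]
    _ = g * c * g⁻¹ * n := by group

/-- Let `D ⊴ G` with `Z(D) = 1` and let `N₁ ≤ D` be a minimal normal subgroup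
of `G` which is non-abelian simple.  If `G/(N₁·C_G(N₁))` is solvable and `D`
has no non-trivial solvable quotient, then `D = N₁ × C_D(N₁)`. -/
theorem stmt4 {G : Type} [Group G] [Finite G]
    (D : Subgroup G) [D.Normal] (hZ : Subgroup.center D = ⊥)
    (N₁ : Subgroup G) [N₁.Normal] (hmin : IsMinimalNormal N₁) (hND : N₁ ≤ D)
    (hsimple : IsSimpleGroup N₁) (hnonab : ¬ ∀ x y : N₁, x * y = y * x)
    (hsolv : IsSolvable (G ⧸ (N₁ ⊔ Subgroup.centralizer (N₁ : Set G))))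
    (hres : ∀ (K : Subgroup D), K.Normal →
      (∀ [inst : K.Normal], IsSolvable (D ⧸ K)) → K = ⊤) :
    N₁ ⊔ (Subgroup.centralizer (N₁ : Set G) ⊓ D) = D ∧
    N₁ ⊓ (Subgroup.centralizer (N₁ : Set G) ⊓ D) = ⊥ := by
  set C := Subgroup.centralizer (N₁ : Set G) with hC
  set M := N₁ ⊔ C with hM
  -- D ≤ M
  have hDM : D ≤ M := by
    set f : D →* G ⧸ M := (QuotientGroup.mk' M).comp D.subtype with hf
    have hker : f.ker.Normal := inferInstance
    have hKtop : f.ker = ⊤ := by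
      apply hres f.ker hker
      intro _
      exact @solvable_of_solvable_injective _ _ _ _ _ (QuotientGroup.kerLift_injective f) hsolv
    intro d hd
    have : (⟨d, hd⟩ : D) ∈ f.ker := by rw [hKtop]; trivial
    have h1 : ((d : G) : G ⧸ M) = 1 := this
    rwa [← QuotientGroup.eq_one_iff d]
  constructor
  · apply le_antisymm
    · exact sup_le hND inf_le_right
    · intro d hd
      have hdM : d ∈ M := hDM hd
      rw [← SetLike.mem_coe, hM, Subgroup.normal_mul] at hdM
      obtain ⟨n, hn, c, hc, rfl⟩ := hdM
      have hcD : c ∈ D := by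
        have : n⁻¹ * (n * c) ∈ D := D.mul_mem (D.inv_mem (hND hn)) hd
        simpa using this
      exact Subgroup.mul_mem _ (Subgroup.mem_sup_left hn)
        (Subgroup.mem_sup_right ⟨hc, hcD⟩)
  · rw [eq_bot_iff]
    rintro x ⟨hxN, hxC, -⟩
    -- x is in the center of N₁
    by_contra hx1
    have hcen : ∀ y z : N₁, y * z = z * y := by
      have := hsimple.eq_bot_or_eq_top_of_normal (Subgroup.center N₁) (Subgroup.center N₁).normal_of_characteristic
      rcases this with h | h
      · exfalso
        have : (⟨x, hxN⟩ : N₁) ∈ Subgroup.center N₁ := by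
          rw [Subgroup.mem_center_iff]
          intro g
          have := hxC g.1 g.2
          exact Subtype.ext this
        rw [h] at this
        exact hx1 (by simpa using congrArg Subtype.val this)
      · intro y z
        have hy : y ∈ Subgroup.center N₁ := by rw [h]; trivial
        exact ((Subgroup.mem_center_iff.mp hy) z).symm
    exact hnonab hcen
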